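/- arXiv:1402.5707 — 3 statements merged into one kernel-verified Lean document; each statement's English description precedes it below -/
import Mathlib

section
/- Let ℓ be an odd prime and let A ∈ 1 + ℓ·M_d(ℤ_ℓ). If every eigenvalue of A is a root of unity, then A is unipotent. -/
open Polynomial

section Aux

variable {p : ℕ} [Fact p.Prime] {K : Type*} [Field K] [Algebra ℚ_[p] K]
  [Algebra ℤ_[p] K]

private lemma aux_p_mul_ne_one
    (htower : algebraMap ℤ_[p] K = (algebraMap ℚ_[p] K).comp (PadicInt.Coe.ringHom))
    (v : K) (hv : IsIntegral ℤ_[p] v) : (p : K) * v ≠ 1 := by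
  intro h
  have hq : Function.Injective (algebraMap ℚ_[p] K) := (algebraMap ℚ_[p] K).injective
  have hv1 : v = ((p : K))⁻¹ := by
    rw [eq_inv_of_mul_eq_one_left h, inv_inv]
  have hv2 : v = algebraMap ℚ_[p] K ((p : ℚ_[p])⁻¹) := by
    rw [hv1, map_inv₀, map_natCast]
  obtain ⟨q, hq1, hq2⟩ := hv
  rw [hv2, htower, ← Polynomial.hom_eval₂] at hq2
  have h0 : Polynomial.eval₂ PadicInt.Coe.ringHom ((p : ℚ_[p])⁻¹) q = 0 :=
    hq (by rw [hq2, map_zero])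
  have hint : IsIntegral ℤ_[p] ((p : ℚ_[p])⁻¹) := by
    refine ⟨q, hq1, ?_⟩
    have hcoe : algebraMap ℤ_[p] ℚ_[p] = PadicInt.Coe.ringHom := RingHom.ext fun x => rfl
    rw [hcoe]
    exact h0
  obtain ⟨z, hz⟩ := IsIntegrallyClosed.isIntegral_iff.mp hint
  have hz' : (z : ℚ_[p]) = (p : ℚ_[p])⁻¹ := hz
  have h2 : (p : ℝ) ≤ 1 := by
    calc (p : ℝ) = ‖(p : ℚ_[p])⁻¹‖ := by
          rw [norm_inv, Padic.norm_p, inv_inv]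
      _ = ‖(z : ℚ_[p])‖ := by rw [hz']
      _ = ‖z‖ := PadicInt.norm_def.symm
      _ ≤ 1 := PadicInt.norm_le_one z
  have h3 : (1 : ℝ) < p := by exact_mod_cast (Fact.out : p.Prime).one_lt
  linarith

private lemma aux_int_p : IsIntegral ℤ_[p] ((p : K)) := by
  have h : algebraMap ℤ_[p] K ((p : ℤ_[p])) = (p : K) := map_natCast _ p
  exact h ▸ isIntegral_algebraMap

private lemma aux_pow (x : K) (hx : IsIntegral ℤ_[p] x) (i : ℕ) :
    ∃ y : K, IsIntegral ℤ_[p] y ∧ (1 + (p : K) * x) ^ i = 1 + (p : K) * y := by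
  induction i with
  | zero => exact ⟨0, isIntegral_zero, by simp⟩
  | succ i ih =>
    obtain ⟨y, hy, hy'⟩ := ih
    refine ⟨y + x + (p : K) * (y * x), ((hy.add hx).add (aux_int_p.mul (hy.mul hx))), ?_⟩
    rw [pow_succ, hy']; ring

private lemma aux_prod (s : Finset K) (f : K → K)
    (h : ∀ μ ∈ s, ∃ z : K, IsIntegral ℤ_[p] z ∧ f μ = (p : K) * z) :
    ∃ w : K, IsIntegral ℤ_[p] w ∧ ∏ μ ∈ s, f μ = (p : K) ^ s.card * w := by
  classical
  induction s using Finset.induction_on with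
  | empty => exact ⟨1, isIntegral_one, by simp⟩
  | @insert a s' ha ih =>
    obtain ⟨z, hz, hz'⟩ := h a (Finset.mem_insert_self a s')
    obtain ⟨w, hw, hw'⟩ := ih (fun μ hμ => h μ (Finset.mem_insert_of_mem hμ))
    refine ⟨z * w, hz.mul hw, ?_⟩
    rw [Finset.prod_insert ha, hz', hw', Finset.card_insert_of_notMem ha, pow_succ]
    ring

private lemma aux_torsion
    (htower : algebraMap ℤ_[p] K = (algebraMap ℚ_[p] K).comp (PadicInt.Coe.ringHom))
    (hp2 : p ≠ 2) : ∀ n : ℕ, 0 < n → ∀ x : K, IsIntegral ℤ_[p] x →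
    (1 + (p : K) * x) ^ n = 1 → x = 0 := by
  have hpP : p.Prime := Fact.out
  haveI : NeZero p := ⟨hpP.ne_zero⟩
  haveI : CharZero K := charZero_of_injective_algebraMap (algebraMap ℚ_[p] K).injective
  have hpK0 : (p : K) ≠ 0 := Nat.cast_ne_zero.mpr hpP.ne_zero
  intro n
  induction n using Nat.strong_induction_on with
  | _ n ih =>
  intro hn x hx hxn
  by_cases hdvd : p ∣ n
  · obtain ⟨m, rfl⟩ := hdvd
    have hm : 0 < m := Nat.pos_of_ne_zero fun h => by simp [h] at hn
    obtain ⟨y, hy, hy'⟩ := aux_pow x hx m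
    set ν : K := 1 + (p : K) * y with hν
    have hνp : ν ^ p = 1 := by
      rw [← hy', ← pow_mul, mul_comm m p]; exact hxn
    have hy0 : y = 0 := by
      by_contra hy0
      have hν1 : ν ≠ 1 := by
        intro h
        apply hy0
        have : (p : K) * y = 0 := by
          have := h; rw [hν] at this; linear_combination this
        rcases mul_eq_zero.mp this with h' | h'
        · exact absurd h' hpK0
        · exact h'
      have hord : orderOf ν = p := by
        have hdvd' := orderOf_dvd_of_pow_eq_one hνp
        rcases hpP.eq_one_or_self_of_dvd _ hdvd' with h1 | h1
        · exact absurd (orderOf_eq_one_iff.mp h1) hν1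
        · exact h1
      have hprim : IsPrimitiveRoot ν p := hord ▸ IsPrimitiveRoot.orderOf ν
      have hcyc := cyclotomic_eq_prod_X_sub_primitiveRoots hprim
      have heval : (p : K) = ∏ μ ∈ primitiveRoots p K, (1 - μ) := by
        have h1 := eval_one_cyclotomic_prime (R := K) (p := p)
        rw [hcyc, eval_prod] at h1
        rw [← h1]
        refine (Finset.prod_congr rfl fun μ _ => by simp).symm
      have hfac : ∀ μ ∈ primitiveRoots p K,
          ∃ z : K, IsIntegral ℤ_[p] z ∧ 1 - μ = (p : K) * z := by
        intro μ hμ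
        have hμp : μ ^ p = 1 := ((mem_primitiveRoots hpP.pos).mp hμ).pow_eq_one
        obtain ⟨i, _, hiμ⟩ := hprim.eq_pow_of_pow_eq_one hμp
        obtain ⟨z, hz, hz'⟩ := aux_pow y hy i
        refine ⟨-z, hz.neg, ?_⟩
        rw [← hiμ, hν, hz']
        ring
      obtain ⟨w, hw, hw'⟩ := aux_prod (primitiveRoots p K) (fun μ => 1 - μ) hfac
      have hcard : (primitiveRoots p K).card = p - 1 := by
        rw [hprim.card_primitiveRoots, Nat.totient_prime hpP]
      have h3 : 2 < p := lt_of_le_of_ne hpP.two_le (Ne.symm hp2)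
      obtain ⟨k, hk⟩ : ∃ k, p = k + 3 := ⟨p - 3, by omega⟩
      have hcard' : (primitiveRoots p K).card = k + 2 := by rw [hcard, hk]; omega
      rw [hw', hcard'] at heval
      have h1 : (1 : K) = (p : K) ^ (k + 1) * w := by
        apply mul_left_cancel₀ hpK0
        calc (p : K) * 1 = (p : K) := mul_one _
          _ = (p : K) ^ (k + 2) * w := heval
          _ = (p : K) * ((p : K) ^ (k + 1) * w) := by ring
      have h2 : (p : K) * ((p : K) ^ k * w) = 1 :=
        calc (p : K) * ((p : K) ^ k * w) = (p : K) ^ (k + 1) * w := by ring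
          _ = 1 := h1.symm
      exact aux_p_mul_ne_one htower _ ((aux_int_p.pow k).mul hw) h2
    have hνone : ν = 1 := by rw [hν, hy0]; ring
    have hxm : (1 + (p : K) * x) ^ m = 1 := by rw [hy', hνone]
    have hmlt : m < p * m := by
      have h2 := hpP.two_le
      calc m = 1 * m := (one_mul m).symm
        _ < p * m := (Nat.mul_lt_mul_right hm).mpr (by omega)
    exact ih m hmlt hm x hx hxm
  · set μ : K := 1 + (p : K) * x with hμdef
    have h0 : (∑ i ∈ Finset.range n, μ ^ i) * ((p : K) * x) = 0 := by
      have hg := geom_sum_mul μ n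
      rw [hxn, sub_self] at hg
      have : μ - 1 = (p : K) * x := by rw [hμdef]; ring
      rw [← this]; exact hg
    by_contra hx0
    have hsum0 : (∑ i ∈ Finset.range n, μ ^ i) = 0 := by
      rcases mul_eq_zero.mp h0 with h | h
      · exact h
      · rcases mul_eq_zero.mp h with h' | h'
        · exact absurd h' hpK0
        · exact absurd h' hx0
    choose y hy hy' using aux_pow x hx
    have hsum : (∑ i ∈ Finset.range n, μ ^ i)
        = (n : K) + (p : K) * ∑ i ∈ Finset.range n, y i := by
      rw [Finset.sum_congr rfl fun i _ => hy' i, Finset.sum_add_distrib,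
        Finset.sum_const, Finset.card_range, ← Finset.mul_sum]
      simp
    have ht : IsIntegral ℤ_[p] (∑ i ∈ Finset.range n, y i) :=
      IsIntegral.sum _ (fun i _ => hy i)
    rw [hsum] at hsum0
    have hn1 : ‖(n : ℤ_[p])‖ = 1 := by
      refine le_antisymm (PadicInt.norm_le_one _) (not_lt.mp fun hlt => ?_)
      have : ‖((n : ℤ) : ℤ_[p])‖ < 1 := by push_cast; exact hlt
      have hd := (PadicInt.norm_int_lt_one_iff_dvd (n : ℤ)).mp this
      exact hdvd (Int.natCast_dvd_natCast.mp (by exact_mod_cast hd))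
    obtain ⟨u, hu'⟩ := PadicInt.isUnit_iff.mpr hn1
    set finv : K := algebraMap ℤ_[p] K ((u⁻¹ : ℤ_[p]ˣ) : ℤ_[p]) with hfinv
    have hinv : (n : K) * finv = 1 := by
      have hmu : ((n : ℤ_[p]) * ((u⁻¹ : ℤ_[p]ˣ) : ℤ_[p]) : ℤ_[p]) = 1 := by
        rw [← hu']; exact u.mul_inv
      calc (n : K) * finv = algebraMap ℤ_[p] K ((n : ℤ_[p]) * ((u⁻¹ : ℤ_[p]ˣ) : ℤ_[p])) := by
            rw [map_mul, map_natCast]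
        _ = 1 := by rw [hmu, map_one]
    apply aux_p_mul_ne_one htower (-(∑ i ∈ Finset.range n, y i * finv))
      ((IsIntegral.sum _ (fun i _ => (hy i).mul isIntegral_algebraMap)).neg)
    have hnK : (n : K) = -((p : K) * ∑ i ∈ Finset.range n, y i) :=
      eq_neg_of_add_eq_zero_left hsum0
    calc (p : K) * -(∑ i ∈ Finset.range n, y i * finv)
        = -((p : K) * ∑ i ∈ Finset.range n, y i) * finv := by
          rw [← Finset.sum_mul]; ring
      _ = (n : K) * finv := by rw [← hnK]
      _ = 1 := hinv

end Aux

/-- Let `ℓ` be an odd prime and `A ∈ 1 + ℓ·M_d(ℤ_ℓ)`.  If every eigenvalue of `A`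
(in an algebraic closure of `ℚ_ℓ`) is a root of unity, then `A` is unipotent. -/
theorem unipotent_of_roots_of_unity_odd {p : ℕ} [Fact p.Prime] (hp : p ≠ 2)
    {d : ℕ} (A B : Matrix (Fin d) (Fin d) ℤ_[p])
    (hA : A = 1 + (p : ℤ_[p]) • B)
    (hroots : ∀ μ ∈ (((A.map ((algebraMap ℚ_[p] (AlgebraicClosure ℚ_[p])).comp
        (PadicInt.Coe.ringHom))).charpoly).roots),
      ∃ n : ℕ, 0 < n ∧ μ ^ n = 1) :
    (A - 1) ^ d = 0 := by
  classical
  set K := AlgebraicClosure ℚ_[p]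
  set f : ℤ_[p] →+* K := (algebraMap ℚ_[p] K).comp (PadicInt.Coe.ringHom) with hf
  letI : Algebra ℤ_[p] K := f.toAlgebra
  have hpP : p.Prime := Fact.out
  haveI : CharZero K := charZero_of_injective_algebraMap (algebraMap ℚ_[p] K).injective
  have hpK0 : (p : K) ≠ 0 := Nat.cast_ne_zero.mpr hpP.ne_zero
  set A' := A.map f with hA'
  set B' := B.map f with hB'
  -- every root of the charpoly is 1
  have hone : ∀ μ ∈ A'.charpoly.roots, μ = 1 := by
    intro μ hμ
    have hroot : A'.charpoly.IsRoot μ := isRoot_of_mem_roots hμ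
    -- det (μ • 1 - A') = 0
    have hdet : (μ • (1 : Matrix (Fin d) (Fin d) K) - A').det = 0 := by
      have h1 : ((Matrix.charmatrix A').map (eval μ)).det = 0 := by
        have hmd := RingHom.map_det (evalRingHom μ) (Matrix.charmatrix A')
        rw [RingHom.mapMatrix_apply, coe_evalRingHom] at hmd
        rw [← hmd]
        exact hroot
      have h2 : (Matrix.charmatrix A').map (eval μ)
          = μ • (1 : Matrix (Fin d) (Fin d) K) - A' := by
        ext i j
        by_cases hij : i = j
        · subst hij
          simp [Matrix.charmatrix_apply_eq, Matrix.one_apply, Matrix.smul_apply]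
        · simp [Matrix.charmatrix_apply_ne _ _ _ hij, Matrix.one_apply_ne hij,
            Matrix.smul_apply]
      rwa [h2] at h1
    set x : K := (μ - 1) / p with hx
    have hμx : μ = 1 + (p : K) * x := by
      rw [hx, mul_div_assoc', mul_div_cancel_left₀ _ hpK0]; ring
    -- μ • 1 - A' = p • (x • 1 - B')
    have hAmap : A' = 1 + (p : K) • B' := by
      rw [hA', hA]
      ext i j
      by_cases hij : i = j <;>
        simp [hij, Matrix.map_apply, Matrix.add_apply, Matrix.smul_apply,
          Matrix.one_apply, smul_eq_mul, map_add, map_mul, map_one, map_natCast] <;>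
        exact Or.inl rfl
    have hfact : μ • (1 : Matrix (Fin d) (Fin d) K) - A'
        = (p : K) • (x • (1 : Matrix (Fin d) (Fin d) K) - B') := by
      rw [hAmap]
      ext i j
      by_cases hij : i = j
      · subst hij
        simp [Matrix.smul_apply, Matrix.one_apply, Matrix.sub_apply, Matrix.add_apply]
        rw [hμx]; ring
      · simp [Matrix.smul_apply, Matrix.one_apply_ne hij, Matrix.sub_apply,
          Matrix.add_apply]; ring
    rw [hfact, Matrix.det_smul] at hdet
    have hdetB : (x • (1 : Matrix (Fin d) (Fin d) K) - B').det = 0 := by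
      rcases mul_eq_zero.mp hdet with h | h
      · exact absurd h (pow_ne_zero _ hpK0)
      · exact h
    -- x is a root of charpoly of B', hence integral over ℤ_[p]
    have hxroot : B'.charpoly.IsRoot x := by
      have h2 : (Matrix.charmatrix B').map (eval x)
          = x • (1 : Matrix (Fin d) (Fin d) K) - B' := by
        ext i j
        by_cases hij : i = j
        · subst hij
          simp [Matrix.charmatrix_apply_eq, Matrix.one_apply, Matrix.smul_apply]
        · simp [Matrix.charmatrix_apply_ne _ _ _ hij, Matrix.one_apply_ne hij,
            Matrix.smul_apply]
      have hmd := RingHom.map_det (evalRingHom x) (Matrix.charmatrix B')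
      rw [RingHom.mapMatrix_apply, coe_evalRingHom] at hmd
      show eval x B'.charpoly = 0
      rw [Matrix.charpoly, hmd, h2, hdetB]
    have hxint : IsIntegral ℤ_[p] x := by
      refine ⟨B.charpoly, B.charpoly_monic, ?_⟩
      have : eval₂ f x B.charpoly = eval x (B.charpoly.map f) := by
        rw [eval_map]
      rw [show (algebraMap ℤ_[p] K) = f from rfl]
      rw [this, ← Matrix.charpoly_map]
      exact hxroot
    obtain ⟨n, hn, hμn⟩ := hroots μ hμ
    have hx0 : x = 0 := aux_torsion (K := K) (by rfl) hp n hn x hxint (by rw [← hμx]; exact hμn)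
    rw [hμx, hx0]; ring
  -- charpoly A' = (X - 1) ^ d
  have hsplits : Splits A'.charpoly :=
    IsAlgClosed.splits _
  have hd : A'.charpoly.natDegree = d := by
    simpa using A'.charpoly_natDegree_eq_dim
  have hcard : Multiset.card A'.charpoly.roots = d := by
    rw [splits_iff_card_roots.mp hsplits, hd]
  have hrepl : A'.charpoly.roots = Multiset.replicate d 1 := by
    rw [Multiset.eq_replicate]
    exact ⟨hcard, fun b hb => hone b hb⟩
  have hcp : A'.charpoly = (X - C 1) ^ d := by
    have := hsplits.eq_prod_roots_of_monic A'.charpoly_monic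
    rw [hrepl] at this
    simpa [Multiset.map_replicate, Multiset.prod_replicate] using this
  -- pull back along the injective map f
  have hfinj : Function.Injective f := by
    rw [hf]
    exact (algebraMap ℚ_[p] K).injective.comp Subtype.coe_injective
  have hcpZ : A.charpoly = (X - C 1) ^ d := by
    apply Polynomial.map_injective f hfinj
    rw [← Matrix.charpoly_map, hcp]
    simp [Polynomial.map_pow, Polynomial.map_sub, Polynomial.map_one]
  have := A.aeval_self_charpoly
  rw [hcpZ] at this
  simpa [map_pow, sub_eq_add_neg] using this
end

section
/- Let A ∈ 1 + 4·M_d(ℤ₂). If every eigenvalue of A is a root of unity, then A is unipotent. -/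
open Polynomial

local notation "L2" => AlgebraicClosure ℚ_[2]

lemma aux_algebraMap_eq :
    algebraMap ℤ_[2] L2 =
      (algebraMap ℚ_[2] L2).comp PadicInt.Coe.ringHom := by
  ext x; exact IsScalarTower.algebraMap_apply ℤ_[2] ℚ_[2] L2 x

lemma aux_norm_le (x : ℚ_[2])
    (h : IsIntegral ℤ_[2] ((algebraMap ℚ_[2] L2) x)) : ‖x‖ ≤ 1 := by
  have hx : IsIntegral ℤ_[2] x := by
    rwa [← isIntegral_algHom_iff (IsScalarTower.toAlgHom ℤ_[2] ℚ_[2] L2)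
      (algebraMap ℚ_[2] L2).injective]
  obtain ⟨y, rfl⟩ := IsIntegrallyClosed.isIntegral_iff.mp hx
  exact y.norm_le_one

lemma aux_norm_two : ‖(2 : ℚ_[2])‖ = 1/2 := by
  have := @Padic.norm_p 2 _
  simpa using this

lemma aux_norm_four : ‖(4 : ℚ_[2])‖ = 1/4 := by
  have : (4 : ℚ_[2]) = 2 ^ 2 := by norm_num
  rw [this, norm_pow, aux_norm_two]
  norm_num

lemma aux_eval_charpoly {n : Type*} [Fintype n] [DecidableEq n] {R : Type*} [CommRing R]
    (M : Matrix n n R) (t : R) :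
    M.charpoly.eval t = (t • (1 : Matrix n n R) - M).det := by
  rw [Matrix.charpoly, ← Polynomial.coe_evalRingHom, RingHom.map_det]
  congr 1
  ext i j
  by_cases h : i = j <;>
    simp [Matrix.charmatrix_apply, h, Matrix.one_apply, Matrix.diagonal_apply]

lemma aux_pow_int (μ : L2) (hint : IsIntegral ℤ_[2] ((μ - 1) / 4)) (j : ℕ) :
    IsIntegral ℤ_[2] ((μ ^ j - 1) / 4) := by
  have h4 : IsIntegral ℤ_[2] (4 : L2) := by
    rw [(map_ofNat (algebraMap ℤ_[2] L2) 4).symm]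
    exact isIntegral_algebraMap
  have hμ : IsIntegral ℤ_[2] μ := by
    have h : μ = 1 + 4 * ((μ - 1) / 4) := by field_simp; ring
    rw [h]
    exact isIntegral_one.add (h4.mul hint)
  induction j with
  | zero => simpa using isIntegral_zero
  | succ j ih =>
      have h : (μ ^ (j + 1) - 1) / 4 = μ ^ j * ((μ - 1) / 4) + (μ ^ j - 1) / 4 := by
        field_simp; ring
      rw [h]
      exact ((hμ.pow j).mul hint).add ih

lemma aux_key (μ : L2) (hint : IsIntegral ℤ_[2] ((μ - 1) / 4))
    {n : ℕ} (hn : 0 < n) (h1 : μ ^ n = 1) : μ = 1 := by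
  by_contra hne
  have hP : ∃ m : ℕ, 0 < m ∧ μ ^ m = 1 := ⟨n, hn, h1⟩
  classical
  set N := Nat.find hP with hN
  obtain ⟨hNpos, hNone⟩ := Nat.find_spec hP
  -- the geometric sum vanishes
  have hsum : (∑ j ∈ Finset.range N, μ ^ j) = 0 := by
    have h := geom_sum_mul μ N
    rw [hNone, sub_self] at h
    rcases mul_eq_zero.mp h with h | h
    · exact h
    · exact absurd (sub_eq_zero.mp h) hne
  -- hence N/4 is integral
  have hint4 : IsIntegral ℤ_[2] ((algebraMap ℚ_[2] L2) ((N : ℚ_[2]) / 4)) := by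
    have h2 : (∑ j ∈ Finset.range N, (μ ^ j - 1) / 4) = -((N : L2) / 4) := by
      rw [← Finset.sum_div, Finset.sum_sub_distrib, hsum]
      simp [neg_div]
    have h3 : IsIntegral ℤ_[2] (∑ j ∈ Finset.range N, (μ ^ j - 1) / 4) :=
      IsIntegral.sum _ fun j _ => aux_pow_int μ hint j
    rw [h2] at h3
    have h4 := h3.neg
    rw [neg_neg] at h4
    have h5 : ((N : L2) / 4) = (algebraMap ℚ_[2] L2) ((N : ℚ_[2]) / 4) := by
      simp [map_div₀, map_ofNat]
    rwa [h5] at h4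
  have hnorm := aux_norm_le _ hint4
  -- 2 ∣ N
  have hNnorm : ‖(N : ℚ_[2])‖ ≤ 1/4 := by
    have h : (N : ℚ_[2]) = (N : ℚ_[2]) / 4 * 4 := by field_simp
    rw [h, norm_mul, aux_norm_four]
    nlinarith [norm_nonneg ((N : ℚ_[2]) / 4)]
  have hdvd : 2 ∣ N := by
    have h : ‖((N : ℤ) : ℚ_[2])‖ ≤ (2 : ℝ) ^ (-(1 : ℕ) : ℤ) := by
      push_cast
      calc ‖(N : ℚ_[2])‖ ≤ 1/4 := hNnorm
      _ ≤ (2 : ℝ) ^ (-(1 : ℕ) : ℤ) := by norm_num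
    have := (Padic.norm_int_le_pow_iff_dvd (N : ℤ) 1).mp h
    exact_mod_cast (by simpa using this : (2 : ℤ) ∣ (N : ℤ))
  obtain ⟨m, hm⟩ := hdvd
  have hmpos : 0 < m := by omega
  have hmlt : m < N := by omega
  have hζne : μ ^ m ≠ 1 := fun h => (Nat.find_min hP hmlt) ⟨hmpos, h⟩
  have hζsq : (μ ^ m) ^ 2 = 1 := by
    rw [← pow_mul, mul_comm, ← hm, hNone]
  have hζ : μ ^ m = -1 := by
    have h := hζsq
    have h2 : (μ ^ m - 1) * (μ ^ m + 1) = 0 := by ring_nf; rw [← sub_eq_zero] at h ⊢; linear_combination h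
    rcases mul_eq_zero.mp h2 with h | h
    · exact absurd (sub_eq_zero.mp h) hζne
    · linear_combination h
  -- then -1/2 is integral: contradiction
  have hint2 := aux_pow_int μ hint m
  rw [hζ] at hint2
  have heq : ((-1 : L2) - 1) / 4 = (algebraMap ℚ_[2] L2) (-(2 : ℚ_[2])/4) := by
    simp [map_div₀, map_ofNat]
    norm_num
  rw [heq] at hint2
  have := aux_norm_le _ hint2
  rw [norm_div, norm_neg, aux_norm_two, aux_norm_four] at this
  norm_num at this

/-- Let `A ∈ 1 + 4·M_d(ℤ₂)`.  If every eigenvalue of `A`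
(in an algebraic closure of `ℚ₂`) is a root of unity, then `A` is unipotent. -/
theorem unipotent_of_roots_of_unity_two
    {d : ℕ} (A B : Matrix (Fin d) (Fin d) ℤ_[2])
    (hA : A = 1 + (4 : ℤ_[2]) • B)
    (hroots : ∀ μ ∈ (((A.map ((algebraMap ℚ_[2] (AlgebraicClosure ℚ_[2])).comp
        (PadicInt.Coe.ringHom))).charpoly).roots),
      ∃ n : ℕ, 0 < n ∧ μ ^ n = 1) :
    (A - 1) ^ d = 0 := by
  classical
  set f : ℤ_[2] →+* L2 := (algebraMap ℚ_[2] L2).comp PadicInt.Coe.ringHom with hf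
  have hfalg : f = algebraMap ℤ_[2] L2 := aux_algebraMap_eq.symm
  set A' : Matrix (Fin d) (Fin d) L2 := A.map f with hA'
  -- every root of the characteristic polynomial is 1
  have hone : ∀ μ ∈ A'.charpoly.roots, μ = 1 := by
    intro μ hμ
    obtain ⟨n, hn, hpow⟩ := hroots μ hμ
    refine aux_key μ ?_ hn hpow
    have hroot : A'.charpoly.eval μ = 0 := (Polynomial.isRoot_of_mem_roots hμ)
    rw [aux_eval_charpoly] at hroot
    have hmat : μ • (1 : Matrix (Fin d) (Fin d) L2) - A' =
        (4 : L2) • (((μ - 1) / 4) • (1 : Matrix (Fin d) (Fin d) L2) - B.map f) := by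
      ext i j
      by_cases h : i = j
      · simp only [hA', hA, Matrix.map_apply, Matrix.one_apply, Matrix.smul_apply,
          Matrix.sub_apply, Matrix.add_apply, smul_eq_mul, h, if_true, map_add, map_mul,
          map_one, map_ofNat]
        field_simp
        ring
      · simp only [hA', hA, Matrix.map_apply, Matrix.one_apply, Matrix.smul_apply,
          Matrix.sub_apply, Matrix.add_apply, smul_eq_mul, h, if_false, map_add, map_mul,
          map_one, map_zero, map_ofNat, Matrix.one_apply_ne h]
        ring
    rw [hmat, Matrix.det_smul, Fintype.card_fin] at hroot
    have h4 : (4 : L2) ^ d ≠ 0 := pow_ne_zero _ (by norm_num)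
    have hdet : (((μ - 1) / 4) • (1 : Matrix (Fin d) (Fin d) L2) - B.map f).det = 0 :=
      (mul_eq_zero.mp hroot).resolve_left h4
    have heval : (B.map f).charpoly.eval ((μ - 1) / 4) = 0 := by
      rw [aux_eval_charpoly]; exact hdet
    refine ⟨B.charpoly, Matrix.charpoly_monic B, ?_⟩
    rw [← hfalg, ← eval_map, ← Matrix.charpoly_map]
    exact heval
  -- the characteristic polynomial is (X - 1)^d
  have hM : A'.charpoly.Monic := Matrix.charpoly_monic _
  have hsp : A'.charpoly.Splits := IsAlgClosed.splits _
  have hdeg : A'.charpoly.natDegree = d := by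
    rw [Matrix.charpoly_natDegree_eq_dim, Fintype.card_fin]
  have hcard : A'.charpoly.roots.card = d := by
    rw [splits_iff_card_roots.mp hsp, hdeg]
  have hroots_eq : A'.charpoly.roots = Multiset.replicate d 1 :=
    Multiset.eq_replicate.mpr ⟨hcard, fun b hb => hone b hb⟩
  have hcp : A'.charpoly = (X - C 1) ^ d := by
    conv_lhs => rw [hsp.eq_prod_roots_of_monic hM]
    rw [hroots_eq, Multiset.map_replicate, Multiset.prod_replicate]
  -- Cayley–Hamilton
  have hCH := Matrix.aeval_self_charpoly A'
  rw [hcp] at hCH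
  have h0 : (A' - 1) ^ d = 0 := by
    simpa [map_pow, map_sub, aeval_X, aeval_C] using hCH
  -- pull back along the injective ring hom
  have hinj : Function.Injective f := fun x y h =>
    Subtype.coe_injective ((algebraMap ℚ_[2] L2).injective h)
  have hmap0 : f.mapMatrix ((A - 1) ^ d) = 0 := by
    rw [map_pow, map_sub, map_one]
    simpa [RingHom.mapMatrix_apply] using h0
  have hinj2 : Function.Injective
      (f.mapMatrix : Matrix (Fin d) (Fin d) ℤ_[2] →+* Matrix (Fin d) (Fin d) L2) := by
    intro M N h
    ext i j
    have := congrArg (fun M => M i j) h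
    simpa [RingHom.mapMatrix_apply, Matrix.map_apply] using hinj this
  exact hinj2 (by rw [hmap0, map_zero])
end

section
/- Any finite subgroup of GL_d(ℤ₂) maps injectively under reduction into GL_d(ℤ/4ℤ); in particular its order divides |GL_d(ℤ/4ℤ)|. -/
open Matrix
open PadicInt Finset

lemma dvd_of_toZModPow_eq_zero (x : ℤ_[2]) (h : PadicInt.toZModPow 2 x = 0) :
    (2:ℤ_[2])^2 ∣ x := by
  have hx : x ∈ RingHom.ker (toZModPow (p := 2) 2) := h
  rw [PadicInt.ker_toZModPow, Ideal.mem_span_singleton] at hx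
  exact_mod_cast hx

lemma core {d : ℕ} (B : Matrix (Fin d) (Fin d) ℤ_[2]) (q : ℕ) (hq : q.Prime)
    (hB : B.map (PadicInt.toZModPow 2) = 1) (hpow : B ^ q = 1) : B = 1 := by
  set M : Matrix (Fin d) (Fin d) ℤ_[2] := B - 1 with hM
  rw [← sub_eq_zero, ← hM]
  by_contra hM0
  classical
  have h4 : ∀ i j, (2:ℤ_[2])^2 ∣ M i j := by
    intro i j
    apply dvd_of_toZModPow_eq_zero
    have h5 := congrFun (congrFun hB i) j
    simp only [Matrix.map_apply] at h5
    simp only [hM, Matrix.sub_apply, map_sub, h5, Matrix.one_apply]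
    split <;> simp_all
  set P : ℕ → Prop := fun k => ∀ i j, (2:ℤ_[2])^k ∣ M i j with hP
  have hnot : ∃ k, ¬ P k := by
    have : ∃ i j, M i j ≠ 0 := by
      by_contra h; push_neg at h; exact hM0 (by ext i j; exact h i j)
    obtain ⟨i, j, hij⟩ := this
    refine ⟨(M i j).valuation + 1, fun h => ?_⟩
    have h' := h i j
    rw [← Ideal.mem_span_singleton] at h'
    have := (PadicInt.mem_span_pow_iff_le_valuation _ hij _).mp (by exact_mod_cast h')
    omega
  have hKspec : ¬ P (Nat.find hnot) := Nat.find_spec hnot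
  have hK3 : 3 ≤ Nat.find hnot := by
    rcases Nat.lt_or_ge (Nat.find hnot) 3 with h | h
    · exact absurd (fun i j => dvd_trans (pow_dvd_pow _ (by omega)) (h4 i j)) hKspec
    · exact h
  set k := Nat.find hnot - 1 with hk
  have hk2 : 2 ≤ k := by omega
  have hPk : P k := by
    by_contra h
    have : Nat.find hnot ≤ k := Nat.find_le h
    omega
  have hPk1 : ¬ P (k + 1) := by
    have : k + 1 = Nat.find hnot := by omega
    rw [this]; exact hKspec
  set C : Matrix (Fin d) (Fin d) ℤ_[2] := ∑ i ∈ range q, B ^ i with hC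
  have hCM : C * M = 0 := by
    rw [hM, geom_sum_mul, hpow, sub_self]
  set E : Matrix (Fin d) (Fin d) ℤ_[2] := C - (q : Matrix (Fin d) (Fin d) ℤ_[2]) with hE
  have hE4 : ∀ i j, (2:ℤ_[2])^2 ∣ E i j := by
    have hBi : ∀ i : ℕ, (B ^ i).map (PadicInt.toZModPow 2) = 1 := by
      intro i
      have := map_pow (RingHom.mapMatrix (toZModPow (p:=2) 2)) B i
      simp only [RingHom.mapMatrix_apply] at this
      rw [this, hB, one_pow]
    have hCmap : C.map (PadicInt.toZModPow 2)
        = (q : Matrix (Fin d) (Fin d) (ZMod (2^2))) := by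
      have := map_sum (RingHom.mapMatrix (toZModPow (p:=2) 2)) (fun i => B ^ i) (range q)
      simp only [RingHom.mapMatrix_apply] at this
      rw [hC, this]
      simp only [hBi]
      rw [Finset.sum_const, Finset.card_range, nsmul_eq_mul, mul_one]
    have h2 := map_natCast ((toZModPow (p:=2) 2).mapMatrix : Matrix (Fin d) (Fin d) ℤ_[2] →+* Matrix (Fin d) (Fin d) (ZMod (2^2))) q
    simp only [RingHom.mapMatrix_apply] at h2
    have hmap : E.map (PadicInt.toZModPow 2) = 0 := by
      have h3 := map_sub (RingHom.mapMatrix (toZModPow (p:=2) 2)) C (q : Matrix (Fin d) (Fin d) ℤ_[2])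
      simp only [RingHom.mapMatrix_apply] at h3
      rw [hE, h3, hCmap, h2, sub_self]
    intro i j
    apply dvd_of_toZModPow_eq_zero
    have := congrFun (congrFun hmap i) j
    simpa [Matrix.map_apply] using this
  have hEM : ∀ i j, (2:ℤ_[2])^(k+2) ∣ (E * M) i j := by
    intro i j
    rw [Matrix.mul_apply]
    refine Finset.dvd_sum fun l _ => ?_
    have h22 : (2:ℤ_[2])^(k+2) = 2^2 * 2^k := by ring
    rw [h22]
    exact mul_dvd_mul (hE4 i l) (hPk l j)
  have hqM : ∀ i j, (2:ℤ_[2])^(k+2) ∣ (q : ℤ_[2]) * M i j := by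
    intro i j
    have h0 : ((q : Matrix (Fin d) (Fin d) ℤ_[2]) + E) * M = 0 := by
      rw [hE, add_sub_cancel, hCM]
    have h1 : (q : ℤ_[2]) * M i j + (E * M) i j = 0 := by
      have h1' := congrFun (congrFun h0 i) j
      rw [← Matrix.diagonal_natCast] at h1'
      simpa [Matrix.add_mul, Matrix.add_apply, Matrix.diagonal_mul] using h1'
    have h2 : (q : ℤ_[2]) * M i j = - (E * M) i j := eq_neg_of_add_eq_zero_left h1
    rw [h2]
    exact (hEM i j).neg_right
  apply hPk1
  intro i j
  rcases hq.eq_two_or_odd' with rfl | hodd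
  · have := hqM i j
    have h22 : (2:ℤ_[2])^(k+2) = 2 * 2^(k+1) := by ring
    rw [h22] at this
    have hcast : ((2:ℕ) : ℤ_[2]) = 2 := by norm_cast
    rw [hcast] at this
    exact (mul_dvd_mul_iff_left (two_ne_zero)).mp this
  · have hu : IsUnit ((q:ℕ) : ℤ_[2]) := by
      rw [PadicInt.isUnit_iff]
      refine le_antisymm (PadicInt.norm_le_one _) ?_
      by_contra hlt
      push_neg at hlt
      have : ((q:ℤ) : ℤ_[2]) = ((q:ℕ) : ℤ_[2]) := by push_cast; ring
      rw [← this] at hlt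
      have := (PadicInt.norm_int_lt_one_iff_dvd (p := 2) (q:ℤ)).mp hlt
      have : (2:ℕ) ∣ q := by exact_mod_cast this
      exact (Nat.not_even_iff_odd.mpr hodd) (even_iff_two_dvd.mpr this)
    obtain ⟨u, hu'⟩ := hu
    have hdvd : (2:ℤ_[2])^(k+1) ∣ (q : ℤ_[2]) * M i j :=
      dvd_trans (pow_dvd_pow _ (by omega)) (hqM i j)
    have : M i j = ↑u⁻¹ * ((q : ℤ_[2]) * M i j) := by
      rw [← hu', ← mul_assoc, Units.inv_mul, one_mul]
    rw [this]
    exact hdvd.mul_left _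

lemma ord_triv {d : ℕ} (A : GL (Fin d) ℤ_[2]) (hfin : IsOfFinOrder A)
    (hA : Matrix.GeneralLinearGroup.map (n := Fin d) (PadicInt.toZModPow (p := 2) 2) A = 1) :
    A = 1 := by
  by_contra hA1
  have hn1 : orderOf A ≠ 1 := fun h => hA1 (orderOf_eq_one_iff.mp h)
  have hn0 : orderOf A ≠ 0 := hfin.orderOf_pos.ne'
  set q := (orderOf A).minFac with hq'
  have hq : q.Prime := Nat.minFac_prime hn1
  set m := orderOf A / q with hm
  have hmq : m * q = orderOf A := Nat.div_mul_cancel (orderOf A).minFac_dvd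
  set w := A ^ m with hw
  have hwq : w ^ q = 1 := by rw [hw, ← pow_mul, hmq, pow_orderOf_eq_one]
  have hwmap : Matrix.GeneralLinearGroup.map (n := Fin d)
      (PadicInt.toZModPow (p := 2) 2) w = 1 := by
    rw [hw, map_pow, hA, one_pow]
  have hw1 : w = 1 := by
    have h1 : (w : Matrix (Fin d) (Fin d) ℤ_[2]) ^ q = 1 := by
      rw [← Units.val_pow_eq_pow_val, hwq, Units.val_one]
    have h2 : (w : Matrix (Fin d) (Fin d) ℤ_[2]).map (PadicInt.toZModPow 2) = 1 := by
      have h3 := congrArg Units.val hwmap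
      simpa [Matrix.GeneralLinearGroup.map, Units.coe_map, RingHom.mapMatrix_apply] using h3
    exact Units.ext (core _ q hq h2 h1)
  have hdvd : orderOf A ∣ m := orderOf_dvd_of_pow_eq_one (hw ▸ hw1)
  have hmlt : m < orderOf A := Nat.div_lt_self (Nat.pos_of_ne_zero hn0) hq.one_lt
  have hm0 : m ≠ 0 := by
    intro h
    rw [h, zero_mul] at hmq
    exact hn0 hmq.symm
  exact absurd (Nat.le_of_dvd (Nat.pos_of_ne_zero hm0) hdvd) (not_le.mpr hmlt)

set_option maxHeartbeats 1000000 in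
/-- Any finite subgroup of `GL_d(ℤ₂)` maps injectively under reduction into
`GL_d(ℤ/4ℤ)`; in particular its order divides `|GL_d(ℤ/4ℤ)|`. -/
theorem finite_subgroup_embeds_mod_four
    {d : ℕ} (H : Subgroup (GL (Fin d) ℤ_[2])) (hH : Finite H) :
    Set.InjOn (Matrix.GeneralLinearGroup.map (n := Fin d)
        (PadicInt.toZModPow (p := 2) 2))
      (H : Set (GL (Fin d) ℤ_[2])) ∧
    Nat.card H ∣ Nat.card (GL (Fin d) (ZMod (2 ^ 2))) := by
  set φ := Matrix.GeneralLinearGroup.map (n := Fin d) (PadicInt.toZModPow (p := 2) 2) with hφ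
  have hinj : Set.InjOn φ (H : Set (GL (Fin d) ℤ_[2])) := by
    intro x hx y hy hxy
    have hg : y⁻¹ * x ∈ H := H.mul_mem (H.inv_mem hy) hx
    have hfin : IsOfFinOrder (y⁻¹ * x) := by
      have h2 : IsOfFinOrder (⟨y⁻¹ * x, hg⟩ : H) := @isOfFinOrder_of_finite _ _ hH _
      rw [isOfFinOrder_iff_pow_eq_one] at h2 ⊢
      obtain ⟨n, hn, hn1⟩ := h2
      refine ⟨n, hn, ?_⟩
      have := congrArg (Subtype.val) hn1
      rw [SubmonoidClass.coe_pow] at this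
      exact this
    have h1 : φ (y⁻¹ * x) = 1 := by
      rw [_root_.map_mul, _root_.map_inv, hxy, inv_mul_cancel]
    exact (inv_mul_eq_one.mp (ord_triv _ hfin h1)).symm
  refine ⟨hinj, ?_⟩
  have hcard : Nat.card (H.map φ) = Nat.card H := by
    have h1 : Nat.card (H.map φ) = Nat.card (φ '' (H : Set (GL (Fin d) ℤ_[2]))) :=
      Nat.card_congr (Equiv.setCongr (Subgroup.coe_map φ H))
    rw [h1, Nat.card_image_of_injOn hinj]
    rfl
  rw [← hcard]
  exact Subgroup.card_subgroup_dvd_card (H.map φ)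
end
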